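/- For the two-qubit ansatz ψ(θ₀,θ₁,θ₂) with coefficients (cos θ₀ cos θ₁, cos θ₀ cos θ₂ sin θ₁ − cos θ₁ sin θ₀ sin θ₂, sin θ₀ sin θ₁, cos θ₁ cos θ₂ sin θ₀ + cos θ₀ sin θ₁ sin θ₂), the Fubini–Study metric equals the 3×3 matrix with diagonal entries (1, 1, (1 − cos 2θ₀ cos 2θ₁)/2) and off-diagonal entries g₀₂ = g₂₀ = cos θ₁ sin θ₁, g₁₂ = g₂₁ = −cos θ₀ sin θ₀, g₀₁ = g₁₀ = 0. -/

import Mathlib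

/-- The two-qubit ansatz state, a real unit vector in ℝ⁴ ⊂ ℂ⁴. -/
noncomputable def psi14 (θ : Fin 3 → ℝ) : Fin 4 → ℝ :=
  ![Real.cos (θ 0) * Real.cos (θ 1),
    Real.cos (θ 0) * Real.cos (θ 2) * Real.sin (θ 1)
      - Real.cos (θ 1) * Real.sin (θ 0) * Real.sin (θ 2),
    Real.sin (θ 0) * Real.sin (θ 1),
    Real.cos (θ 1) * Real.cos (θ 2) * Real.sin (θ 0)
      + Real.cos (θ 0) * Real.sin (θ 1) * Real.sin (θ 2)]

/-- Partial derivative `∂_i ψ`. -/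
noncomputable def dpsi14 (i : Fin 3) (θ : Fin 3 → ℝ) : Fin 4 → ℝ :=
  fderiv ℝ psi14 θ (Pi.single i 1)

/-- Fubini–Study metric of the real ansatz:
`g_{ij} = ⟨∂_i ψ, ∂_j ψ⟩ − ⟨∂_i ψ, ψ⟩⟨ψ, ∂_j ψ⟩`. -/
noncomputable def fsMetric14 (i j : Fin 3) (θ : Fin 3 → ℝ) : ℝ :=
  (∑ m, dpsi14 i θ m * dpsi14 j θ m)
    - (∑ m, dpsi14 i θ m * psi14 θ m) * (∑ m, psi14 θ m * dpsi14 j θ m)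

noncomputable def pr14 (i : Fin 3) : (Fin 3 → ℝ) →L[ℝ] ℝ := ContinuousLinearMap.proj i

lemma hcos14 (i : Fin 3) (θ : Fin 3 → ℝ) :
    HasFDerivAt (fun θ : Fin 3 → ℝ => Real.cos (θ i)) ((-Real.sin (θ i)) • pr14 i) θ :=
  by have h := (Real.hasDerivAt_cos (θ i)).comp_hasFDerivAt θ (hasFDerivAt_apply (𝕜 := ℝ) i θ); exact h

lemma hsin14 (i : Fin 3) (θ : Fin 3 → ℝ) :
    HasFDerivAt (fun θ : Fin 3 → ℝ => Real.sin (θ i)) ((Real.cos (θ i)) • pr14 i) θ :=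
  by have h := (Real.hasDerivAt_sin (θ i)).comp_hasFDerivAt θ (hasFDerivAt_apply (𝕜 := ℝ) i θ); exact h

noncomputable def D14 (θ : Fin 3 → ℝ) : (Fin 3 → ℝ) →L[ℝ] (Fin 4 → ℝ) :=
  ContinuousLinearMap.pi
    ![Real.cos (θ 0) • ((-Real.sin (θ 1)) • pr14 1)
        + Real.cos (θ 1) • ((-Real.sin (θ 0)) • pr14 0),
      ((Real.cos (θ 0) * Real.cos (θ 2)) • (Real.cos (θ 1) • pr14 1)
        + Real.sin (θ 1) • (Real.cos (θ 0) • ((-Real.sin (θ 2)) • pr14 2)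
            + Real.cos (θ 2) • ((-Real.sin (θ 0)) • pr14 0)))
        - ((Real.cos (θ 1) * Real.sin (θ 0)) • (Real.cos (θ 2) • pr14 2)
        + Real.sin (θ 2) • (Real.cos (θ 1) • (Real.cos (θ 0) • pr14 0)
            + Real.sin (θ 0) • ((-Real.sin (θ 1)) • pr14 1))),
      Real.sin (θ 0) • (Real.cos (θ 1) • pr14 1)
        + Real.sin (θ 1) • (Real.cos (θ 0) • pr14 0),
      ((Real.cos (θ 1) * Real.cos (θ 2)) • (Real.cos (θ 0) • pr14 0)
        + Real.sin (θ 0) • (Real.cos (θ 1) • ((-Real.sin (θ 2)) • pr14 2)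
            + Real.cos (θ 2) • ((-Real.sin (θ 1)) • pr14 1)))
        + ((Real.cos (θ 0) * Real.sin (θ 1)) • (Real.cos (θ 2) • pr14 2)
        + Real.sin (θ 2) • (Real.cos (θ 0) • (Real.cos (θ 1) • pr14 1)
            + Real.sin (θ 1) • ((-Real.sin (θ 0)) • pr14 0)))]

lemma hasFDerivAt_psi14 (θ : Fin 3 → ℝ) : HasFDerivAt psi14 (D14 θ) θ := by
  apply hasFDerivAt_pi'.2
  intro m
  fin_cases m <;>
    simp only [D14, ContinuousLinearMap.proj_pi, Matrix.cons_val_zero, Matrix.cons_val_one,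
      Matrix.head_cons, Matrix.cons_val_two, Matrix.tail_cons, Matrix.cons_val_three,
      Fin.isValue, psi14, Matrix.cons_val_fin_one, Fin.mk_one]
  · exact (hcos14 0 θ).mul (hcos14 1 θ)
  · exact (((hcos14 0 θ).mul (hcos14 2 θ)).mul (hsin14 1 θ)).sub
      (((hcos14 1 θ).mul (hsin14 0 θ)).mul (hsin14 2 θ))
  · exact (hsin14 0 θ).mul (hsin14 1 θ)
  · exact (((hcos14 1 θ).mul (hcos14 2 θ)).mul (hsin14 0 θ)).add
      (((hcos14 0 θ).mul (hsin14 1 θ)).mul (hsin14 2 θ))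

lemma dpsi14_eq (i : Fin 3) (θ : Fin 3 → ℝ) : dpsi14 i θ = D14 θ (Pi.single i 1) := by
  unfold dpsi14; rw [(hasFDerivAt_psi14 θ).fderiv]

lemma dpsi14_zero (θ : Fin 3 → ℝ) : dpsi14 0 θ =
    ![-Real.sin (θ 0) * Real.cos (θ 1),
      -(Real.sin (θ 0) * Real.cos (θ 2) * Real.sin (θ 1))
        - Real.cos (θ 0) * Real.cos (θ 1) * Real.sin (θ 2),
      Real.cos (θ 0) * Real.sin (θ 1),
      Real.cos (θ 0) * Real.cos (θ 1) * Real.cos (θ 2)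
        - Real.sin (θ 0) * Real.sin (θ 1) * Real.sin (θ 2)] := by
  rw [dpsi14_eq]
  funext m
  fin_cases m <;>
    simp [D14, pr14, Pi.single_apply] <;> ring

lemma dpsi14_one (θ : Fin 3 → ℝ) : dpsi14 1 θ =
    ![-(Real.cos (θ 0) * Real.sin (θ 1)),
      Real.cos (θ 0) * Real.cos (θ 1) * Real.cos (θ 2)
        + Real.sin (θ 0) * Real.sin (θ 1) * Real.sin (θ 2),
      Real.sin (θ 0) * Real.cos (θ 1),
      -(Real.sin (θ 0) * Real.sin (θ 1) * Real.cos (θ 2))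
        + Real.cos (θ 0) * Real.cos (θ 1) * Real.sin (θ 2)] := by
  rw [dpsi14_eq]
  funext m
  fin_cases m <;>
    simp [D14, pr14, Pi.single_apply] <;> ring

lemma dpsi14_two (θ : Fin 3 → ℝ) : dpsi14 2 θ =
    ![0,
      -(Real.cos (θ 0) * Real.sin (θ 1) * Real.sin (θ 2))
        - Real.sin (θ 0) * Real.cos (θ 1) * Real.cos (θ 2),
      0,
      -(Real.sin (θ 0) * Real.cos (θ 1) * Real.sin (θ 2))
        + Real.cos (θ 0) * Real.sin (θ 1) * Real.cos (θ 2)] := by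
  rw [dpsi14_eq]
  funext m
  fin_cases m <;>
    simp [D14, pr14, Pi.single_apply] <;> ring

lemma orthL14 (i : Fin 3) (θ : Fin 3 → ℝ) :
    (∑ m, dpsi14 i θ m * psi14 θ m) = 0 := by
  have p0 := Real.sin_sq_add_cos_sq (θ 0)
  have p1 := Real.sin_sq_add_cos_sq (θ 1)
  have p2 := Real.sin_sq_add_cos_sq (θ 2)
  have h0 : (∑ m, dpsi14 0 θ m * psi14 θ m) = 0 := by
    simp only [Fin.sum_univ_four, Fin.isValue, dpsi14_zero, psi14,
      Matrix.cons_val_zero, Matrix.cons_val_one, Matrix.head_cons, Matrix.cons_val_two,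
      Matrix.tail_cons, Matrix.cons_val_three]
    linear_combination ((1)*Real.sin (θ 0)*Real.cos (θ 0) + (-1)*Real.sin (θ 0)*Real.cos (θ 0)*Real.cos (θ 2) ^ 2 + (-1)*Real.sin (θ 0)*Real.cos (θ 0)*Real.sin (θ 2) ^ 2) * p1 + ((-1)*Real.sin (θ 0)*Real.cos (θ 0) + (2)*Real.sin (θ 0)*Real.cos (θ 0)*Real.cos (θ 1) ^ 2) * p2
  have h1 : (∑ m, dpsi14 1 θ m * psi14 θ m) = 0 := by
    simp only [Fin.sum_univ_four, Fin.isValue, dpsi14_one, psi14,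
      Matrix.cons_val_zero, Matrix.cons_val_one, Matrix.head_cons, Matrix.cons_val_two,
      Matrix.tail_cons, Matrix.cons_val_three]
    linear_combination ((1)*Real.sin (θ 1)*Real.cos (θ 1) + (-1)*Real.sin (θ 1)*Real.cos (θ 1)*Real.cos (θ 2) ^ 2 + (-1)*Real.sin (θ 1)*Real.cos (θ 1)*Real.sin (θ 2) ^ 2) * p0 + ((-1)*Real.sin (θ 1)*Real.cos (θ 1) + (2)*Real.cos (θ 0) ^ 2*Real.sin (θ 1)*Real.cos (θ 1)) * p2
  have h2 : (∑ m, dpsi14 2 θ m * psi14 θ m) = 0 := by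
    simp only [Fin.sum_univ_four, Fin.isValue, dpsi14_two, psi14,
      Matrix.cons_val_zero, Matrix.cons_val_one, Matrix.head_cons, Matrix.cons_val_two,
      Matrix.tail_cons, Matrix.cons_val_three]
    ring
  fin_cases i
  · exact h0
  · exact h1
  · exact h2

lemma orthR14 (j : Fin 3) (θ : Fin 3 → ℝ) :
    (∑ m, psi14 θ m * dpsi14 j θ m) = 0 := by
  rw [← orthL14 j θ]
  exact Finset.sum_congr rfl fun m _ => mul_comm _ _

lemma fsMetric14_eq_dot (i j : Fin 3) (θ : Fin 3 → ℝ) :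
    fsMetric14 i j θ = ∑ m, dpsi14 i θ m * dpsi14 j θ m := by
  rw [fsMetric14, orthL14, orthR14, mul_zero, sub_zero]

/-- The Fubini–Study metric of the two-qubit ansatz equals the 3×3 matrix with
diagonal `(1, 1, (1 − cos 2θ₀ cos 2θ₁)/2)` and off-diagonal entries
`g₀₂ = g₂₀ = cos θ₁ sin θ₁`, `g₁₂ = g₂₁ = −cos θ₀ sin θ₀`, `g₀₁ = g₁₀ = 0`. -/
theorem stmt14 (θ : Fin 3 → ℝ) :
    fsMetric14 0 0 θ = 1 ∧ fsMetric14 1 1 θ = 1 ∧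
    fsMetric14 2 2 θ = (1 - Real.cos (2 * θ 0) * Real.cos (2 * θ 1)) / 2 ∧
    fsMetric14 0 2 θ = Real.cos (θ 1) * Real.sin (θ 1) ∧
    fsMetric14 2 0 θ = Real.cos (θ 1) * Real.sin (θ 1) ∧
    fsMetric14 1 2 θ = -(Real.cos (θ 0) * Real.sin (θ 0)) ∧
    fsMetric14 2 1 θ = -(Real.cos (θ 0) * Real.sin (θ 0)) ∧
    fsMetric14 0 1 θ = 0 ∧ fsMetric14 1 0 θ = 0 := by
  have p0 := Real.sin_sq_add_cos_sq (θ 0)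
  have p1 := Real.sin_sq_add_cos_sq (θ 1)
  have p2 := Real.sin_sq_add_cos_sq (θ 2)
  refine ⟨?_, ?_, ?_, ?_, ?_, ?_, ?_, ?_, ?_⟩ <;>
    rw [fsMetric14_eq_dot] <;>
    try simp only [Fin.sum_univ_four, Fin.isValue, dpsi14_zero, dpsi14_one, dpsi14_two,
      Matrix.cons_val_zero, Matrix.cons_val_one, Matrix.head_cons, Matrix.cons_val_two,
      Matrix.tail_cons, Matrix.cons_val_three]
  · linear_combination ((1)*Real.cos (θ 1) ^ 2 + (1)*Real.sin (θ 1) ^ 2*Real.cos (θ 2) ^ 2 + (1)*Real.sin (θ 1) ^ 2*Real.sin (θ 2) ^ 2) * p0 + ((1)*Real.cos (θ 2) ^ 2 + (1)*Real.sin (θ 2) ^ 2 + (1)*Real.cos (θ 0) ^ 2 + (-1)*Real.cos (θ 0) ^ 2*Real.cos (θ 2) ^ 2 + (-1)*Real.cos (θ 0) ^ 2*Real.sin (θ 2) ^ 2) * p1 + ((1) + (-1)*Real.cos (θ 1) ^ 2 + (-1)*Real.cos (θ 0) ^ 2 + (2)*Real.cos (θ 0) ^ 2*Real.cos (θ 1)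 ^ 2) * p2
  · linear_combination ((1)*Real.cos (θ 1) ^ 2 + (1)*Real.sin (θ 1) ^ 2*Real.cos (θ 2) ^ 2 + (1)*Real.sin (θ 1) ^ 2*Real.sin (θ 2) ^ 2) * p0 + ((1)*Real.cos (θ 2) ^ 2 + (1)*Real.sin (θ 2) ^ 2 + (1)*Real.cos (θ 0) ^ 2 + (-1)*Real.cos (θ 0) ^ 2*Real.cos (θ 2) ^ 2 + (-1)*Real.cos (θ 0) ^ 2*Real.sin (θ 2) ^ 2) * p1 + ((1) + (-1)*Real.cos (θ 1) ^ 2 + (-1)*Real.cos (θ 0) ^ 2 + (2)*Real.cos (θ 0) ^ 2*Real.cos (θ 1) ^ 2) * p2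
  · rw [Real.cos_two_mul (θ 0), Real.cos_two_mul (θ 1)]
    linear_combination ((1)*Real.cos (θ 1) ^ 2*Real.cos (θ 2) ^ 2 + (1)*Real.cos (θ 1) ^ 2*Real.sin (θ 2) ^ 2) * p0 + ((1)*Real.cos (θ 0) ^ 2*Real.cos (θ 2) ^ 2 + (1)*Real.cos (θ 0) ^ 2*Real.sin (θ 2) ^ 2) * p1 + ((1)*Real.cos (θ 1) ^ 2 + (1)*Real.cos (θ 0) ^ 2 + (-2)*Real.cos (θ 0) ^ 2*Real.cos (θ 1) ^ 2) * p2
  · linear_combination ((1)*Real.sin (θ 1)*Real.cos (θ 1)*Real.cos (θ 2) ^ 2 + (1)*Real.sin (θ 1)*Real.cos (θ 1)*Real.sin (θ 2) ^ 2) * p0 + ((1)*Real.sin (θ 1)*Real.cos (θ 1)) * p2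
  · linear_combination ((1)*Real.sin (θ 1)*Real.cos (θ 1)*Real.cos (θ 2) ^ 2 + (1)*Real.sin (θ 1)*Real.cos (θ 1)*Real.sin (θ 2) ^ 2) * p0 + ((1)*Real.sin (θ 1)*Real.cos (θ 1)) * p2
  · linear_combination ((-1)*Real.sin (θ 0)*Real.cos (θ 0)*Real.cos (θ 2) ^ 2 + (-1)*Real.sin (θ 0)*Real.cos (θ 0)*Real.sin (θ 2) ^ 2) * p1 + ((-1)*Real.sin (θ 0)*Real.cos (θ 0)) * p2
  · linear_combination ((-1)*Real.sin (θ 0)*Real.cos (θ 0)*Real.cos (θ 2) ^ 2 + (-1)*Real.sin (θ 0)*Real.cos (θ 0)*Real.sin (θ 2) ^ 2) * p1 + ((-1)*Real.sin (θ 0)*Real.cos (θ 0)) * p2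
  · linear_combination ((-2)*Real.sin (θ 0)*Real.cos (θ 0)*Real.sin (θ 1)*Real.cos (θ 1)) * p2
  · linear_combination ((-2)*Real.sin (θ 0)*Real.cos (θ 0)*Real.sin (θ 1)*Real.cos (θ 1)) * p2
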